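/- Let G be a finite simple graph and let f and g be configurations of G with f(v) ≥ g(v) for every vertex v. Then bg(G; f) ≤ bg(G; g) and b̂g(G; f) ≤ b̂g(G; g); moreover, bg(G; g) − bg(G; f) ≤ 2·∑_v (f(v) − g(v)) and b̂g(G; g) − b̂g(G; f) ≤ 2·∑_v (f(v) − g(v)). -/

import Mathlib

open Classical

namespace BrushGame

variable {V : Type*}

/-- The number of neighbours of `x` in `G` that belong to the list `l`. -/
noncomputable def nbr [Fintype V] (G : SimpleGraph V) (x : V) (l : List V) : ℕ :=
  (Finset.univ.filter (fun u => G.Adj x u ∧ u ∈ l)).card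

/-- The degree of `x` in `G`. -/
noncomputable def deg [Fintype V] (G : SimpleGraph V) (x : V) : ℕ :=
  (Finset.univ.filter (fun u => G.Adj x u)).card

/-- `l` is a valid sequence of vertex firings starting from the brush assignment `c`:
the vertices of `l` fire in order; when a vertex fires, the number of brushes on it
(those from `c` plus one from each previously fired neighbour) is at least its number of
still-dirty neighbours. -/
def FiringSeq [Fintype V] (G : SimpleGraph V) (c : V → ℕ) (l : List V) : Prop :=
  l.Nodup ∧ ∀ i : Fin l.length,
    deg G (l.get i) ≤ c (l.get i) + 2 * nbr G (l.get i) (l.take i.1)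

/-- Vertex `v` gets cleaned, starting from the assignment `c` of brushes. -/
def Cleaned [Fintype V] (G : SimpleGraph V) (c : V → ℕ) (v : V) : Prop :=
  ∃ l, FiringSeq G c l ∧ v ∈ l

/-- All vertices are clean, i.e. the game is over. -/
def Over [Fintype V] (G : SimpleGraph V) (c : V → ℕ) : Prop := ∀ v, Cleaned G c v

/-- An upper bound on the number of turns of any brushing game on `G` (plus one). -/
noncomputable def fuel [Fintype V] (G : SimpleGraph V) : ℕ := (∑ v, deg G v) + 1

/-- The value (number of brushes placed from now on, under optimal play) of the brushing
game on `G` from the brush assignment `c`, with `n` turns of fuel remaining;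
`mover = true` means that it is Min's turn to place a brush (on a dirty vertex),
`mover = false` that it is Max's turn.  The fuel never runs out along legal play when
the game is started with fuel `fuel G`. -/
noncomputable def val [Fintype V] (G : SimpleGraph V) : Bool → ℕ → (V → ℕ) → ℕ
  | _, 0, _ => 0
  | mover, n + 1, c =>
    if Over G c then 0
    else if mover then
      1 + sInf {k | ∃ v, ¬ Cleaned G c v ∧ k = val G false n (Function.update c v (c v + 1))}
    else
      1 + sSup {k | ∃ v, ¬ Cleaned G c v ∧ k = val G true n (Function.update c v (c v + 1))}

/-- The game brush number of `G` starting from the initial configuration `f`, Min to move. -/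
noncomputable def bgFrom [Fintype V] (G : SimpleGraph V) (f : V → ℕ) : ℕ :=
  val G true (fuel G) f

/-- The game brush number of `G` starting from the initial configuration `f`, Max to move. -/
noncomputable def bghatFrom [Fintype V] (G : SimpleGraph V) (f : V → ℕ) : ℕ :=
  val G false (fuel G) f

/-- The (Min-start) game brush number of `G`. -/
noncomputable def bg [Fintype V] (G : SimpleGraph V) : ℕ := bgFrom G (fun _ => 0)

/-- The Max-start game brush number of `G`. -/
noncomputable def bghat [Fintype V] (G : SimpleGraph V) : ℕ := bghatFrom G (fun _ => 0)

/-- `G` can be cleaned by the configuration `f`. -/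
def CleansBy [Fintype V] (G : SimpleGraph V) (f : V → ℕ) : Prop :=
  ∃ l, FiringSeq G f l ∧ ∀ v : V, v ∈ l

/-- The brush number of `G`. -/
noncomputable def bNum [Fintype V] (G : SimpleGraph V) : ℕ :=
  sInf {k | ∃ f, CleansBy G f ∧ k = ∑ v, f v}

end BrushGame

namespace BrushGame

set_option linter.unusedSectionVars false

variable {V : Type*} [Fintype V] {G : SimpleGraph V} {c c' : V → ℕ} {v u w x : V}

noncomputable def bump (c : V → ℕ) (v : V) : V → ℕ := Function.update c v (c v + 1)

lemma bump_apply (c : V → ℕ) (v u : V) : bump c v u = if u = v then c v + 1 else c u := by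
  simp [bump, Function.update]

lemma bump_self (c : V → ℕ) (v : V) : bump c v v = c v + 1 := by simp [bump_apply]

lemma bump_ne (c : V → ℕ) (h : u ≠ v) : bump c v u = c u := by simp [bump_apply, h]

lemma le_bump (c : V → ℕ) (v : V) : c ≤ bump c v := by
  intro u; by_cases h : u = v <;> simp [bump_apply, h]

lemma bump_mono (h : c ≤ c') : bump c v ≤ bump c' v := by
  intro u
  have h1 : c u ≤ c' u := h u
  have h2 : c v ≤ c' v := h v
  by_cases hu : u = v <;> simp [bump_apply, hu] <;> omega

lemma bump_comm (h : v ≠ w) (c : V → ℕ) : bump (bump c v) w = bump (bump c w) v := by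
  funext u
  by_cases h1 : u = v <;> by_cases h2 : u = w <;>
    simp_all [bump_apply]

lemma nbr_nil (x : V) : nbr G x ([] : List V) = 0 := by simp [nbr]

lemma nbr_mono {l₁ l₂ : List V} (h : ∀ z ∈ l₁, z ∈ l₂) : nbr G x l₁ ≤ nbr G x l₂ := by
  apply Finset.card_le_card
  intro z hz
  simp only [Finset.mem_filter] at *
  exact ⟨hz.1, hz.2.1, h z hz.2.2⟩

lemma nbr_cons {l : List V} (h : x ∉ l) :
    nbr G u (x :: l) = nbr G u l + (if G.Adj u x then 1 else 0) := by
  classical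
  unfold nbr
  have hsplit : (Finset.univ.filter (fun z => G.Adj u z ∧ z ∈ x :: l)) =
      (Finset.univ.filter (fun z => G.Adj u z ∧ z ∈ l)) ∪
      (Finset.univ.filter (fun z => G.Adj u z ∧ z = x)) := by
    ext z
    simp only [Finset.mem_filter, Finset.mem_union, Finset.mem_univ, true_and, List.mem_cons]
    tauto
  rw [hsplit, Finset.card_union_of_disjoint]
  · congr 1
    by_cases hadj : G.Adj u x
    · rw [if_pos hadj]
      have : (Finset.univ.filter (fun z => G.Adj u z ∧ z = x)) = {x} := by
        ext z
        simp only [Finset.mem_filter, Finset.mem_univ, true_and, Finset.mem_singleton]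
        constructor
        · exact fun hh => hh.2
        · rintro rfl; exact ⟨hadj, rfl⟩
      rw [this, Finset.card_singleton]
    · rw [if_neg hadj]
      have : (Finset.univ.filter (fun z => G.Adj u z ∧ z = x)) = ∅ := by
        apply Finset.filter_false_of_mem
        rintro z _ ⟨ha, rfl⟩; exact hadj ha
      rw [this, Finset.card_empty]
  · rw [Finset.disjoint_filter]
    rintro z _ ⟨_, hzl⟩ ⟨_, rfl⟩
    exact h hzl

lemma fs_nil : FiringSeq G c ([] : List V) :=
  ⟨List.nodup_nil, fun i => absurd i.isLt (by simp)⟩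

lemma fs_mono {l : List V} (h : c ≤ c') (hf : FiringSeq G c l) : FiringSeq G c' l := by
  refine ⟨hf.1, fun i => le_trans (hf.2 i) ?_⟩
  have : c (l.get i) ≤ c' (l.get i) := h _
  omega

lemma cleaned_mono (h : c ≤ c') (hc : Cleaned G c v) : Cleaned G c' v := by
  obtain ⟨l, hl, hv⟩ := hc
  exact ⟨l, fs_mono h hl, hv⟩

lemma over_mono (h : c ≤ c') (ho : Over G c) : Over G c' := fun v => cleaned_mono h (ho v)

lemma fs_cons {t : List V} (h : FiringSeq G c (x :: t)) :
    x ∉ t ∧ deg G x ≤ c x ∧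
      FiringSeq G (fun u => c u + 2 * if G.Adj x u then 1 else 0) t := by
  obtain ⟨hnd, hcond⟩ := h
  have hxt : x ∉ t := (List.nodup_cons.mp hnd).1
  have htnd : t.Nodup := (List.nodup_cons.mp hnd).2
  refine ⟨hxt, ?_, htnd, ?_⟩
  · have := hcond ⟨0, by simp⟩
    simpa [nbr_nil] using this
  · intro i
    have := hcond ⟨i.1 + 1, by simp [Nat.succ_lt_succ i.isLt]⟩
    have hget : (x :: t).get ⟨i.1 + 1, by simp [Nat.succ_lt_succ i.isLt]⟩ = t.get i := rfl
    have htake : (x :: t).take (i.1 + 1) = x :: t.take i.1 := rfl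
    rw [hget, htake] at this
    have hxnot : x ∉ t.take i.1 := fun hmem => hxt (List.mem_of_mem_take hmem)
    rw [nbr_cons hxnot] at this
    have hadj : (if G.Adj (t.get i) x then (1:ℕ) else 0) = (if G.Adj x (t.get i) then 1 else 0) := by
      simp only [SimpleGraph.adj_comm]
    rw [hadj] at this
    show deg G (t.get i) ≤ (c (t.get i) + 2 * if G.Adj x (t.get i) then 1 else 0)
      + 2 * nbr G (t.get i) (t.take i.1)
    omega

lemma fs_append {m : List V} (hm : FiringSeq G c m) (hx : x ∉ m)
    (hdeg : deg G x ≤ c x + 2 * nbr G x m) : FiringSeq G c (m ++ [x]) := by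
  refine ⟨?_, ?_⟩
  · simp [List.nodup_append, hm.1, hx]
    intro a ha hax; exact hx (hax ▸ ha)
  · intro i
    have hlen : (m ++ [x]).length = m.length + 1 := by simp
    by_cases hi : i.1 < m.length
    · have hget : (m ++ [x]).get i = m.get ⟨i.1, hi⟩ := by
        rw [List.get_eq_getElem, List.get_eq_getElem, List.getElem_append_left hi]
      have htake : (m ++ [x]).take i.1 = m.take i.1 := by
        rw [List.take_append]
        have : i.1 - m.length = 0 := by omega
        simp [this]
      rw [hget, htake]
      exact hm.2 ⟨i.1, hi⟩
    · have hieq : i.1 = m.length := by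
        have : i.1 < m.length + 1 := by simpa using i.isLt
        omega
      have hget : (m ++ [x]).get i = x := by
        rw [List.get_eq_getElem]
        simp only [hieq]
        simp
      have htake : (m ++ [x]).take i.1 = m := by
        rw [List.take_append, hieq]
        simp
      rw [hget, htake]
      exact hdeg

lemma fs_absorb : ∀ (l : List V) (ccur : V → ℕ) (m P : List V),
    FiringSeq G c m → FiringSeq G ccur l →
    (∀ y ∈ P, y ∈ m) → (∀ y ∈ l, y ∉ P) →
    (∀ u, u ∉ m → ccur u ≤ c u + 2 * nbr G u P) →
    ∃ m', FiringSeq G c m' ∧ (∀ z ∈ m, z ∈ m') ∧ ∀ y ∈ l, y ∈ m' := by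
  intro l
  induction l with
  | nil => exact fun ccur m P hm _ _ _ _ => ⟨m, hm, fun z hz => hz, by simp⟩
  | cons x t ih =>
    intro ccur m P hm hl hPm hlP hbound
    obtain ⟨hxt, hdegx, ht⟩ := fs_cons hl
    have hxP : x ∉ P := hlP x (by simp)
    have hnbrP : ∀ u, nbr G u (x :: P) = nbr G u P + (if G.Adj u x then 1 else 0) :=
      fun u => nbr_cons hxP
    by_cases hxm : x ∈ m
    · -- x already fired in m
      refine (ih _ m (x :: P) hm ht (by
          intro y hy
          rcases List.mem_cons.mp hy with rfl | hy
          · exact hxm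
          · exact hPm y hy)
        (fun y hy => by
          intro hmem
          rcases List.mem_cons.mp hmem with rfl | hmem
          · exact hxt hy
          · exact hlP y (List.mem_cons_of_mem _ hy) hmem)
        ?_).imp ?_
      · intro u hu
        have := hbound u hu
        have hcomm : (if G.Adj x u then (1:ℕ) else 0) = (if G.Adj u x then 1 else 0) := by
          simp only [SimpleGraph.adj_comm]
        rw [hnbrP u]
        show ccur u + 2 * (if G.Adj x u then 1 else 0) ≤ _
        omega
      · rintro m' ⟨h1, h2, h3⟩
        refine ⟨h1, h2, fun y hy => ?_⟩
        rcases List.mem_cons.mp hy with rfl | hy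
        · exact h2 y hxm
        · exact h3 y hy
    · -- append x to m
      have hdx : deg G x ≤ c x + 2 * nbr G x m := by
        have h1 := hbound x hxm
        have h2 : nbr G x P ≤ nbr G x m := nbr_mono hPm
        omega
      have hm1 : FiringSeq G c (m ++ [x]) := fs_append hm hxm hdx
      refine (ih _ (m ++ [x]) (x :: P) hm1 ht
        (by
          intro y hy
          rcases List.mem_cons.mp hy with rfl | hy
          · simp
          · simp [hPm y hy])
        (fun y hy => by
          intro hmem
          rcases List.mem_cons.mp hmem with rfl | hmem
          · exact hxt hy
          · exact hlP y (List.mem_cons_of_mem _ hy) hmem)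
        ?_).imp ?_
      · intro u hu
        have hum : u ∉ m := fun h => hu (by simp [h])
        have := hbound u hum
        have hcomm : (if G.Adj x u then (1:ℕ) else 0) = (if G.Adj u x then 1 else 0) := by
          simp only [SimpleGraph.adj_comm]
        rw [hnbrP u]
        show ccur u + 2 * (if G.Adj x u then 1 else 0) ≤ _
        omega
      · rintro m' ⟨h1, h2, h3⟩
        refine ⟨h1, fun z hz => h2 z (by simp [hz]), fun y hy => ?_⟩
        rcases List.mem_cons.mp hy with rfl | hy
        · exact h2 y (by simp)
        · exact h3 y hy

lemma cleaned_bump_iff (hv : Cleaned G c v) :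
    Cleaned G (bump c v) u ↔ Cleaned G c u := by
  constructor
  · rintro ⟨l, hl, hu⟩
    obtain ⟨m, hm, hvm⟩ := hv
    obtain ⟨m', hm', _, hlm'⟩ := fs_absorb (G := G) (c := c) l (bump c v) m [] hm hl
      (by simp) (by simp)
      (fun z hz => by
        have hzv : z ≠ v := fun h => hz (h ▸ hvm)
        rw [bump_ne _ hzv, nbr_nil]
        omega)
    exact ⟨m', hm', hlm' u hu⟩
  · exact cleaned_mono (le_bump c v)

lemma over_bump_iff (hv : Cleaned G c v) : Over G (bump c v) ↔ Over G c :=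
  forall_congr' fun u => cleaned_bump_iff hv

variable {mv mv' : Bool} {n m : ℕ}

lemma val_zero : val G mv 0 c = 0 := by cases mv <;> rfl

lemma val_over (h : Over G c) : val G mv n c = 0 := by
  cases n with
  | zero => exact val_zero
  | succ n => cases mv <;> simp [val, h]

lemma not_over_iff : ¬ Over G c ↔ ∃ v, ¬ Cleaned G c v := by
  unfold Over; push_neg; rfl

lemma val_min (h : ¬ Over G c) :
    val G true (n+1) c = 1 + sInf {k | ∃ v, ¬ Cleaned G c v ∧ k = val G false n (bump c v)} := by
  simp [val, h, bump]

lemma val_max (h : ¬ Over G c) :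
    val G false (n+1) c = 1 + sSup {k | ∃ v, ¬ Cleaned G c v ∧ k = val G true n (bump c v)} := by
  simp [val, h, bump]

lemma not_over_of_dirty (h : ¬ Cleaned G c v) : ¬ Over G c := fun ho => h (ho v)

lemma moveSet_nonempty (h : ¬ Over G c) :
    {k | ∃ v, ¬ Cleaned G c v ∧ k = val G mv' n (bump c v)}.Nonempty := by
  obtain ⟨v, hv⟩ := not_over_iff.mp h
  exact ⟨val G mv' n (bump c v), ⟨v, hv, rfl⟩⟩

lemma moveSet_bddAbove :
    BddAbove {k | ∃ v, ¬ Cleaned G c v ∧ k = val G mv' n (bump c v)} := by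
  apply Set.Finite.bddAbove
  apply Set.Finite.subset (Set.finite_range (fun v => val G mv' n (bump c v)))
  rintro k ⟨v, _, rfl⟩
  exact ⟨v, rfl⟩

lemma val_min_le (h : ¬ Cleaned G c v) :
    val G true (n+1) c ≤ 1 + val G false n (bump c v) := by
  rw [val_min (not_over_of_dirty h)]
  have hmem : val G false n (bump c v) ∈
      {k | ∃ w, ¬ Cleaned G c w ∧ k = val G false n (bump c w)} := ⟨v, h, rfl⟩
  exact Nat.add_le_add_left (Nat.sInf_le hmem) 1

lemma le_val_max (h : ¬ Cleaned G c v) :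
    1 + val G true n (bump c v) ≤ val G false (n+1) c := by
  rw [val_max (not_over_of_dirty h)]
  have hmem : val G true n (bump c v) ∈
      {k | ∃ w, ¬ Cleaned G c w ∧ k = val G true n (bump c w)} := ⟨v, h, rfl⟩
  exact Nat.add_le_add_left (le_csSup moveSet_bddAbove hmem) 1

lemma val_max_le (h : ¬ Over G c) {B : ℕ}
    (hb : ∀ v, ¬ Cleaned G c v → val G true n (bump c v) ≤ B) :
    val G false (n+1) c ≤ 1 + B := by
  rw [val_max h]
  refine Nat.add_le_add_left (csSup_le (moveSet_nonempty h) ?_) 1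
  rintro k ⟨v, hv, rfl⟩
  exact hb v hv

lemma val_min_eq (h : ¬ Over G c) :
    ∃ v, ¬ Cleaned G c v ∧ val G true (n+1) c = 1 + val G false n (bump c v) := by
  have hne := moveSet_nonempty (mv' := false) (n := n) h
  obtain ⟨v, hv, hk⟩ := Nat.sInf_mem hne
  exact ⟨v, hv, by rw [val_min h, ← hk]⟩

lemma val_bump_cleaned (hv : Cleaned G c v) :
    ∀ n mv, val G mv n (bump c v) = val G mv n c := by
  intro n
  induction n generalizing c v with
  | zero => intro mv; rw [val_zero, val_zero]
  | succ n ih =>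
    intro mv
    by_cases ho : Over G c
    · rw [val_over ho, val_over ((over_bump_iff hv).mpr ho)]
    · have ho' : ¬ Over G (bump c v) := fun h => ho ((over_bump_iff hv).mp h)
      have hsets : ∀ mv'' : Bool,
          {k | ∃ w, ¬ Cleaned G (bump c v) w ∧ k = val G mv'' n (bump (bump c v) w)} =
          {k | ∃ w, ¬ Cleaned G c w ∧ k = val G mv'' n (bump c w)} := by
        intro mv''
        ext k
        constructor
        · rintro ⟨w, hw, rfl⟩
          have hw' : ¬ Cleaned G c w := fun h => hw ((cleaned_bump_iff hv).mpr h)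
          have hwv : v ≠ w := fun h => hw' (h ▸ hv)
          refine ⟨w, hw', ?_⟩
          rw [bump_comm hwv, ih (cleaned_mono (le_bump c w) hv) mv'']
        · rintro ⟨w, hw, rfl⟩
          have hwv : v ≠ w := fun h => hw (h ▸ hv)
          refine ⟨w, fun h => hw ((cleaned_bump_iff hv).mp h), ?_⟩
          rw [bump_comm hwv, ih (cleaned_mono (le_bump c w) hv) mv'']
      cases mv with
      | true => rw [val_min ho, val_min ho', hsets false]
      | false => rw [val_max ho, val_max ho', hsets true]

lemma val_max_eq (h : ¬ Over G c) :
    ∃ v, ¬ Cleaned G c v ∧ val G false (n+1) c = 1 + val G true n (bump c v) := by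
  have hne := moveSet_nonempty (mv' := true) (n := n) h
  obtain ⟨v, hv, hk⟩ := Nat.sSup_mem hne moveSet_bddAbove
  exact ⟨v, hv, by rw [val_max h, ← hk]⟩

lemma val_fuel_succ : ∀ n (c : V → ℕ) (mv : Bool), val G mv n c ≤ val G mv (n+1) c := by
  intro n
  induction n with
  | zero => intro c mv; rw [val_zero]; exact Nat.zero_le _
  | succ n ih =>
    intro c mv
    by_cases ho : Over G c
    · rw [val_over ho]; exact Nat.zero_le _
    cases mv with
    | true =>
      obtain ⟨v, hv, heq⟩ := val_min_eq (n := n + 1) ho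
      rw [heq]
      calc val G true (n+1) c ≤ 1 + val G false n (bump c v) := val_min_le hv
        _ ≤ 1 + val G false (n+1) (bump c v) := Nat.add_le_add_left (ih _ _) 1
    | false =>
      obtain ⟨v, hv, heq⟩ := val_max_eq (n := n) ho
      rw [heq]
      calc 1 + val G true n (bump c v) ≤ 1 + val G true (n+1) (bump c v) :=
            Nat.add_le_add_left (ih _ _) 1
        _ ≤ val G false (n+2) c := le_val_max hv

lemma val_fuel_mono (h : n ≤ m) : val G mv n c ≤ val G mv m c := by
  induction m, h using Nat.le_induction with
  | base => exact le_refl _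
  | succ m _ ih => exact le_trans ih (val_fuel_succ m c mv)

lemma val_anti : ∀ n (c c' : V → ℕ) (mv : Bool), c ≤ c' → val G mv n c' ≤ val G mv n c := by
  intro n
  induction n with
  | zero => intro c c' mv _; rw [val_zero]; exact Nat.zero_le _
  | succ n ih =>
    intro c c' mv h
    by_cases ho' : Over G c'
    · rw [val_over ho']; exact Nat.zero_le _
    have ho : ¬ Over G c := fun hh => ho' (over_mono h hh)
    cases mv with
    | true =>
      obtain ⟨u, hu, hequ⟩ := val_min_eq (n := n) ho
      rw [hequ]
      by_cases hcu : Cleaned G c' u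
      · obtain ⟨z, hz⟩ := not_over_iff.mp ho'
        calc val G true (n+1) c' ≤ 1 + val G false n (bump c' z) := val_min_le hz
          _ ≤ 1 + val G false n c' := Nat.add_le_add_left (ih _ _ _ (le_bump c' z)) 1
          _ = 1 + val G false n (bump c' u) := by rw [val_bump_cleaned hcu]
          _ ≤ 1 + val G false n (bump c u) := Nat.add_le_add_left (ih _ _ _ (bump_mono h)) 1
      · calc val G true (n+1) c' ≤ 1 + val G false n (bump c' u) := val_min_le hcu
          _ ≤ 1 + val G false n (bump c u) := Nat.add_le_add_left (ih _ _ _ (bump_mono h)) 1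
    | false =>
      rw [val_max ho]
      apply val_max_le ho'
      intro z hz
      have hzc : ¬ Cleaned G c z := fun hh => hz (cleaned_mono h hh)
      calc val G true n (bump c' z) ≤ val G true n (bump c z) := ih _ _ _ (bump_mono h)
        _ ≤ sSup {k | ∃ w, ¬ Cleaned G c w ∧ k = val G true n (bump c w)} :=
            le_csSup moveSet_bddAbove ⟨z, hzc, rfl⟩

lemma sum_bump_bump (c c' : V → ℕ) (w : V) :
    ∑ v, (bump c' w v - bump c w v) = ∑ v, (c' v - c v) := by
  apply Finset.sum_congr rfl
  intro v _
  by_cases hv : v = w <;> simp [bump_apply, hv]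

lemma sum_bump_lt (h : c w < c' w) :
    ∑ v, (c' v - bump c w v) + 1 = ∑ v, (c' v - c v) := by
  have hone : ∑ v, (if v = w then (1:ℕ) else 0) = 1 := by
    rw [Finset.sum_ite_eq' Finset.univ w (fun _ => (1:ℕ))]
    simp
  have key : ∀ v, (c' v - bump c w v) + (if v = w then 1 else 0) = c' v - c v := by
    intro v
    by_cases hv : v = w
    · subst hv
      rw [bump_self, if_pos rfl]
      omega
    · rw [bump_ne _ hv, if_neg hv, Nat.add_zero]
  calc ∑ v, (c' v - bump c w v) + 1
      = ∑ v, (c' v - bump c w v) + ∑ v, (if v = w then (1:ℕ) else 0) := by rw [hone]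
    _ = ∑ v, ((c' v - bump c w v) + if v = w then (1:ℕ) else 0) := by
        rw [Finset.sum_add_distrib]
    _ = ∑ v, (c' v - c v) := Finset.sum_congr rfl (fun v _ => key v)

lemma sum_bump2 (hx : c x < c' x) (hxw : x ≠ w) :
    ∑ v, (bump c' w v - bump (bump c w) x v) + 1 = ∑ v, (c' v - c v) := by
  have h0 : ∑ v, (bump c' w v - bump (bump c w) x v) = ∑ v, (c' v - bump c x v) := by
    apply Finset.sum_congr rfl
    intro v _
    by_cases hv : v = x
    · subst hv
      rw [bump_ne _ hxw, bump_self, bump_ne _ hxw, bump_self]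
    · by_cases hw : v = w
      · subst hw
        rw [bump_self, bump_ne _ hv, bump_self, bump_ne _ (fun h => hv h)]
        omega
      · rw [bump_ne _ hw, bump_ne _ hv, bump_ne _ hw, bump_ne _ hv]
  rw [h0]
  exact sum_bump_lt hx

lemma exists_lt_of_ne (h : c ≤ c') (hne : c ≠ c') : ∃ x, c x < c' x := by
  by_contra hcon
  push_neg at hcon
  exact hne (funext fun v => le_antisymm (h v) (hcon v))

lemma one_le_sum_of_lt (h : c x < c' x) : 1 ≤ ∑ v, (c' v - c v) := by
  have h1 : c' x - c x ≤ ∑ v, (c' v - c v) :=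
    Finset.single_le_sum (f := fun v => c' v - c v) (fun v _ => Nat.zero_le _)
      (Finset.mem_univ x)
  omega

lemma val_over_bound : ∀ n : ℕ,
    (∀ c c' : V → ℕ, c ≤ c' → Over G c' → ∀ D, ∑ v, (c' v - c v) ≤ D →
      val G false n c ≤ 2 * D) ∧
    (∀ c c' : V → ℕ, c ≤ c' → Over G c' → ¬ Over G c → ∀ D, ∑ v, (c' v - c v) ≤ D →
      val G true n c ≤ 2 * D - 1) := by
  intro n
  induction n with
  | zero =>
    exact ⟨fun c c' _ _ D _ => by rw [val_zero]; exact Nat.zero_le _,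
      fun c c' _ _ _ D _ => by rw [val_zero]; exact Nat.zero_le _⟩
  | succ n ih =>
    obtain ⟨ihf, iht⟩ := ih
    have Rt : ∀ D (c c' : V → ℕ), c ≤ c' → Over G c' → ¬ Over G c →
        ∑ v, (c' v - c v) ≤ D → val G true (n+1) c ≤ 2 * D - 1 := by
      intro D
      induction D with
      | zero =>
        intro c c' h hov hno hs
        exfalso
        have hz : ∀ v, c' v - c v = 0 :=
          fun v => Nat.eq_zero_of_le_zero (le_trans (Finset.single_le_sum
            (f := fun v => c' v - c v) (fun v _ => Nat.zero_le _) (Finset.mem_univ v)) hs)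
        have : c = c' := funext fun v => by have e1 := hz v; have e2 : c v ≤ c' v := h v; omega
        exact hno (this ▸ hov)
      | succ D ihD =>
        intro c c' h hov hno hs
        have hne : c ≠ c' := fun he => hno (he ▸ hov)
        obtain ⟨u, hu⟩ := exists_lt_of_ne h hne
        have hle' : bump c u ≤ c' := by
          intro v
          have h1 : c v ≤ c' v := h v
          by_cases hv : v = u <;> simp [bump_apply, hv] <;> omega
        have hsum : ∑ v, (c' v - bump c u v) ≤ D := by
          have := sum_bump_lt (c := c) (c' := c') hu
          omega
        by_cases hcu : Cleaned G c u
        · have heq : val G true (n+1) (bump c u) = val G true (n+1) c :=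
            val_bump_cleaned hcu _ _
          have hno' : ¬ Over G (bump c u) := fun hh => hno ((over_bump_iff hcu).mp hh)
          rw [← heq]
          have := ihD (bump c u) c' hle' hov hno' hsum
          omega
        · have h1 : val G true (n+1) c ≤ 1 + val G false n (bump c u) := val_min_le hcu
          have h2 : val G false n (bump c u) ≤ 2 * D := ihf _ _ hle' hov D hsum
          omega
    refine ⟨?_, fun c c' hh hov hno D hs => Rt D c c' hh hov hno hs⟩
    intro c c' h hov D hs
    by_cases hno : Over G c
    · rw [val_over hno]; exact Nat.zero_le _
    have hne : c ≠ c' := fun he => hno (he ▸ hov)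
    obtain ⟨u, hu⟩ := exists_lt_of_ne h hne
    have hD1 : 1 ≤ D := le_trans (one_le_sum_of_lt hu) hs
    have hbound : ∀ w, ¬ Cleaned G c w → val G true n (bump c w) ≤ 2 * D - 1 := by
      intro w hw
      by_cases how : Over G (bump c w)
      · rw [val_over how]; exact Nat.zero_le _
      · refine iht (bump c w) (bump c' w) (bump_mono h) (over_mono (le_bump c' w) hov) how D ?_
        rw [sum_bump_bump]; exact hs
    have := val_max_le hno hbound
    omega

lemma val_diff : ∀ n (c c' : V → ℕ) (mv : Bool), c ≤ c' →
    val G mv n c ≤ val G mv n c' + 2 * ∑ v, (c' v - c v) := by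
  intro n
  induction n using Nat.strong_induction_on with
  | _ n ih =>
  match n with
  | 0 => intro c c' mv h; rw [val_zero]; exact Nat.zero_le _
  | (n + 1) =>
    intro c c' mv h
    by_cases hoc : Over G c
    · rw [val_over hoc]; exact Nat.zero_le _
    by_cases hoc' : Over G c'
    · rw [val_over hoc']
      cases mv with
      | true =>
        have := (val_over_bound (G := G) (n+1)).2 c c' h hoc' hoc _ (le_refl _)
        omega
      | false =>
        have := (val_over_bound (G := G) (n+1)).1 c c' h hoc' _ (le_refl _)
        omega
    -- both games not over
    have ihn := ih n (Nat.lt_succ_self n)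
    cases mv with
    | true =>
      obtain ⟨u, hu, hequ⟩ := val_min_eq (n := n) hoc'
      have huc : ¬ Cleaned G c u := fun hh => hu (cleaned_mono h hh)
      have h1 : val G true (n+1) c ≤ 1 + val G false n (bump c u) := val_min_le huc
      have h2 : val G false n (bump c u) ≤ val G false n (bump c' u) +
          2 * ∑ v, (bump c' u v - bump c u v) := ihn _ _ _ (bump_mono h)
      rw [sum_bump_bump] at h2
      omega
    | false =>
      by_cases hceq : c = c'
      · subst hceq; exact Nat.le_add_right _ _
      obtain ⟨x, hx⟩ := exists_lt_of_ne h hceq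
      have hD1 : 1 ≤ ∑ v, (c' v - c v) := one_le_sum_of_lt hx
      -- helper H
      have H : val G true n c' ≤ val G false (n+1) c' + 1 := by
        obtain ⟨z, hz⟩ := not_over_iff.mp hoc'
        have h1 : val G true n c' ≤ val G true n (bump c' z) +
            2 * ∑ v, (bump c' z v - c' v) := ihn _ _ _ (le_bump c' z)
        have hs1 : ∑ v, (bump c' z v - c' v) = 1 := by
          have h0 := sum_bump_lt (c := c') (c' := bump c' z) (w := z) (by rw [bump_self]; omega)
          have hzz : ∑ v, (bump c' z v - bump c' z v) = 0 := by simp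
          omega
        have h2 : 1 + val G true n (bump c' z) ≤ val G false (n+1) c' := le_val_max hz
        omega
      have hbound : ∀ w, ¬ Cleaned G c w →
          val G true n (bump c w) ≤ val G false (n+1) c' + 2 * ∑ v, (c' v - c v) - 1 := by
        intro w hw
        by_cases hcw : Cleaned G c' w
        · by_cases hlt : c w < c' w
          · -- (ii)
            have hle2 : bump c w ≤ c' := by
              intro v
              have h1 : c v ≤ c' v := h v
              by_cases hv : v = w <;> simp [bump_apply, hv] <;> omega
            have h1 : val G true n (bump c w) ≤ val G true n c' +
                2 * ∑ v, (c' v - bump c w v) := ihn _ _ _ hle2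
            have h2 := sum_bump_lt (c := c) (c' := c') hlt
            omega
          · -- (iii): c w = c' w
            have hxw : x ≠ w := by
              have h1 : c w ≤ c' w := h w
              intro hh
              subst hh
              omega
            have hsum2 := sum_bump2 (c := c) (c' := c') hx hxw
            have hclean : ∀ k mv'', val G mv'' k (bump c' w) = val G mv'' k c' :=
              fun k mv'' => val_bump_cleaned hcw k mv''
            by_cases hcx : Cleaned G (bump c w) x
            · -- (iii b)
              have heq : val G true n (bump (bump c w) x) = val G true n (bump c w) :=
                val_bump_cleaned hcx _ _
              have hle3 : bump (bump c w) x ≤ bump c' w := by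
                intro v
                show bump (bump c w) x v ≤ bump c' w v
                have h1 : c v ≤ c' v := h v
                by_cases hv : v = x
                · subst hv
                  rw [bump_self, bump_ne _ hxw, bump_ne _ hxw]
                  omega
                · rw [bump_ne _ hv]
                  exact bump_mono h v
              have h1 : val G true n (bump (bump c w) x) ≤ val G true n (bump c' w) +
                  2 * ∑ v, (bump c' w v - bump (bump c w) x v) := ihn _ _ _ hle3
              rw [hclean] at h1
              omega
            · -- (iii a)
              match n with
              | 0 =>
                rw [val_zero]
                exact Nat.zero_le _
              | (m + 1) =>
                have ihm := ih m (by omega)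
                have hle3 : bump (bump c w) x ≤ bump c' w := by
                  intro v
                  show bump (bump c w) x v ≤ bump c' w v
                  have h1 : c v ≤ c' v := h v
                  by_cases hv : v = x
                  · subst hv
                    rw [bump_self, bump_ne _ hxw, bump_ne _ hxw]
                    omega
                  · rw [bump_ne _ hv]
                    exact bump_mono h v
                have h1 : val G true (m+1) (bump c w) ≤
                    1 + val G false m (bump (bump c w) x) := val_min_le hcx
                have h2 : val G false m (bump (bump c w) x) ≤ val G false m (bump c' w) +
                    2 * ∑ v, (bump c' w v - bump (bump c w) x v) := ihm _ _ _ hle3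
                rw [hclean] at h2
                have h3 : val G false m c' ≤ val G false (m+1+1) c' :=
                  val_fuel_mono (by omega)
                omega
        · -- (i)
          have h1 : val G true n (bump c w) ≤ val G true n (bump c' w) +
              2 * ∑ v, (bump c' w v - bump c w v) := ihn _ _ _ (bump_mono h)
          have h2 : 1 + val G true n (bump c' w) ≤ val G false (n+1) c' := le_val_max hcw
          rw [sum_bump_bump] at h1
          omega
      have := val_max_le hoc hbound
      have hXpos : 1 ≤ val G false (n+1) c' := by
        rw [val_max hoc']
        omega
      omega

end BrushGame

/-- If the configuration `f` dominates `g`, then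
`bg(G;f) ≤ bg(G;g)`, `b̂g(G;f) ≤ b̂g(G;g)`, and moreover
`bg(G;g) − bg(G;f) ≤ 2·∑_v (f(v) − g(v))` and `b̂g(G;g) − b̂g(G;f) ≤ 2·∑_v (f(v) − g(v))`. -/
theorem game_brush_number_domination {V : Type*} [Fintype V] (G : SimpleGraph V)
    (f g : V → ℕ) (hdom : ∀ v, g v ≤ f v) :
    BrushGame.bgFrom G f ≤ BrushGame.bgFrom G g ∧
      BrushGame.bghatFrom G f ≤ BrushGame.bghatFrom G g ∧
      (BrushGame.bgFrom G g : ℤ) - BrushGame.bgFrom G f ≤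
        2 * ∑ v, ((f v : ℤ) - g v) ∧
      (BrushGame.bghatFrom G g : ℤ) - BrushGame.bghatFrom G f ≤
        2 * ∑ v, ((f v : ℤ) - g v) := by
  have h : g ≤ f := fun v => hdom v
  have h1 : BrushGame.bgFrom G f ≤ BrushGame.bgFrom G g :=
    BrushGame.val_anti _ _ _ _ h
  have h2 : BrushGame.bghatFrom G f ≤ BrushGame.bghatFrom G g :=
    BrushGame.val_anti _ _ _ _ h
  have h3 : BrushGame.bgFrom G g ≤ BrushGame.bgFrom G f + 2 * ∑ v, (f v - g v) :=
    BrushGame.val_diff _ _ _ _ h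
  have h4 : BrushGame.bghatFrom G g ≤ BrushGame.bghatFrom G f + 2 * ∑ v, (f v - g v) :=
    BrushGame.val_diff _ _ _ _ h
  have hsum : ((∑ v, (f v - g v) : ℕ) : ℤ) = ∑ v, ((f v : ℤ) - g v) := by
    rw [Nat.cast_sum]
    exact Finset.sum_congr rfl fun v _ => Nat.cast_sub (hdom v)
  refine ⟨h1, h2, ?_, ?_⟩ <;> omega
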